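/- arXiv:2212.03653 — 2 statements merged into one kernel-verified Lean document; each statement's English description precedes it below -/
import Mathlib

section
/- There is no injective group homomorphism from S4 × C2 into PGL(2,ℂ). -/
noncomputable section
abbrev GL2 : Type := Matrix.GeneralLinearGroup (Fin 2) ℂ
/-- `PGL(2,ℂ)` as the quotient of `GL(2,ℂ)` by its center. -/
abbrev PGL2 : Type := GL2 ⧸ Subgroup.center GL2

open Matrix

/-- Elements of the center of `GL(2,ℂ)` are scalar matrices. -/
lemma aux_center_scalar {M : GL2} (h : M ∈ Subgroup.center GL2) :
    ∃ r : ℂ, (M : Matrix (Fin 2) (Fin 2) ℂ) = r • 1 := by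
  obtain ⟨r, hr⟩ := Matrix.mem_range_scalar_of_commute_transvectionStruct
      (M := (M : Matrix (Fin 2) (Fin 2) ℂ)) (fun t => by
    have ht : Matrix.SpecialLinearGroup.toGL (⟨t.toMatrix, by simp⟩ : Matrix.SpecialLinearGroup (Fin 2) ℂ) * M
        = M * Matrix.SpecialLinearGroup.toGL (⟨t.toMatrix, by simp⟩ : Matrix.SpecialLinearGroup (Fin 2) ℂ) :=
      Subgroup.mem_center_iff.mp h _
    have := congrArg (fun u : GL2 => (u : Matrix (Fin 2) (Fin 2) ℂ)) ht
    simpa [Matrix.SpecialLinearGroup.toGL, Commute, SemiconjBy] using this)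
  refine ⟨r, ?_⟩
  rw [← hr]
  ext i j
  simp [Matrix.scalar_apply, Matrix.smul_apply, Matrix.one_apply, Matrix.diagonal]

/-- Scalar matrices are central in `GL(2,ℂ)`. -/
lemma aux_scalar_center {M : GL2} {r : ℂ}
    (h : (M : Matrix (Fin 2) (Fin 2) ℂ) = r • 1) : M ∈ Subgroup.center GL2 := by
  rw [Subgroup.mem_center_iff]
  intro g
  refine Units.ext ?_
  rw [Units.val_mul, Units.val_mul, h, Matrix.mul_smul, Matrix.smul_mul, mul_one, one_mul]

lemma aux_quot_eq {u v : GL2} (h : (↑u : PGL2) = ↑v) :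
    ∃ r : ℂ, (v : Matrix (Fin 2) (Fin 2) ℂ) = r • (u : Matrix (Fin 2) (Fin 2) ℂ) := by
  rw [QuotientGroup.eq] at h
  obtain ⟨r, hr⟩ := aux_center_scalar h
  refine ⟨r, ?_⟩
  have hv : v = u * (u⁻¹ * v) := by group
  rw [hv]
  have : ((u * (u⁻¹ * v) : GL2) : Matrix (Fin 2) (Fin 2) ℂ)
      = (u : Matrix (Fin 2) (Fin 2) ℂ) * ((u⁻¹ * v : GL2) : Matrix (Fin 2) (Fin 2) ℂ) := rfl
  rw [this, hr, Matrix.mul_smul, mul_one]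

lemma aux_det_ne_zero (u : GL2) : (u : Matrix (Fin 2) (Fin 2) ℂ).det ≠ 0 :=
  ((Matrix.isUnit_iff_isUnit_det _).mp u.isUnit).ne_zero

/-- If `A*B = r•(B*A)` with `A²`, `B³` scalar and `A, B` invertible, then `r = 1`. -/
lemma aux_r_eq_one {A B : Matrix (Fin 2) (Fin 2) ℂ} {r c0 s : ℂ}
    (hdA : A.det ≠ 0) (hdB : B.det ≠ 0)
    (hA2 : A * A = c0 • 1) (hB3 : B * B * B = s • 1)
    (hr : A * B = r • (B * A)) : r = 1 := by
  have hc0 : c0 ≠ 0 := by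
    intro h
    rw [h, zero_smul] at hA2
    have : A.det * A.det = 0 := by
      have := congrArg Matrix.det hA2
      simpa [Matrix.det_mul] using this
    rcases mul_eq_zero.mp this with h | h <;> exact hdA h
  have hs : s ≠ 0 := by
    intro h
    rw [h, zero_smul] at hB3
    have : A.det ≠ 0 := hdA
    have hd : B.det * B.det * B.det = 0 := by
      have := congrArg Matrix.det hB3
      simpa [Matrix.det_mul] using this
    rcases mul_eq_zero.mp hd with h | h
    · rcases mul_eq_zero.mp h with h | h <;> exact hdB h
    · exact hdB h
  have hAne : A ≠ 0 := fun h => hdA (by rw [h]; simp)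
  have hBne : B ≠ 0 := fun h => hdB (by rw [h]; simp)
  have e1 : A * (A * B) = c0 • B := by
    rw [← mul_assoc, hA2, Matrix.smul_mul, one_mul]
  have e2 : A * (A * B) = (r * r * c0) • B := by
    calc A * (A * B) = A * (r • (B * A)) := by rw [hr]
      _ = r • (A * (B * A)) := by rw [mul_smul_comm]
      _ = r • ((A * B) * A) := by rw [mul_assoc]
      _ = r • ((r • (B * A)) * A) := by rw [hr]
      _ = (r * r) • (B * (A * A)) := by rw [Matrix.smul_mul, smul_smul, mul_assoc]
      _ = (r * r) • (B * (c0 • 1)) := by rw [hA2]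
      _ = (r * r * c0) • B := by rw [mul_smul_comm, smul_smul, mul_one]
  have hrr2 : r * r = 1 := by
    have h0 : (c0 - r * r * c0) • B = 0 := by
      rw [sub_smul, ← e1, e2, sub_self]
    rcases smul_eq_zero.mp h0 with h | h
    · have : c0 * (1 - r * r) = 0 := by linear_combination h
      rcases mul_eq_zero.mp this with h | h
      · exact absurd h hc0
      · linear_combination -h
    · exact absurd h hBne
  have s2 : A * (B * B) = (r * r) • (B * B * A) := by
    calc A * (B * B) = (A * B) * B := by rw [mul_assoc]
      _ = (r • (B * A)) * B := by rw [hr]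
      _ = r • (B * (A * B)) := by rw [Matrix.smul_mul, mul_assoc]
      _ = r • (B * (r • (B * A))) := by rw [hr]
      _ = (r * r) • (B * (B * A)) := by rw [mul_smul_comm, smul_smul]
      _ = (r * r) • (B * B * A) := by rw [mul_assoc]
  have s3 : A * (B * B * B) = (r * r * r) • (B * B * B * A) := by
    calc A * (B * B * B) = (A * (B * B)) * B := (mul_assoc _ _ _).symm
      _ = ((r * r) • (B * B * A)) * B := by rw [s2]
      _ = (r * r) • ((B * B) * (A * B)) := by rw [Matrix.smul_mul, mul_assoc, mul_assoc]
      _ = (r * r) • ((B * B) * (r • (B * A))) := by rw [hr]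
      _ = (r * r * r) • (B * B * B * A) := by
          rw [mul_smul_comm, smul_smul]
          congr 1
          noncomm_ring
  have hrr3 : r * r * r = 1 := by
    rw [hB3] at s3
    have hlhs : A * (s • (1 : Matrix (Fin 2) (Fin 2) ℂ)) = s • A := by
      rw [mul_smul_comm, mul_one]
    have hrhs : (r * r * r) • ((s • (1 : Matrix (Fin 2) (Fin 2) ℂ)) * A)
        = (r * r * r * s) • A := by
      rw [Matrix.smul_mul, one_mul, smul_smul]
    rw [hlhs, hrhs] at s3
    have h0 : (s - r * r * r * s) • A = 0 := by rw [sub_smul, ← s3, sub_self]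
    rcases smul_eq_zero.mp h0 with h | h
    · have : s * (1 - r * r * r) = 0 := by linear_combination h
      rcases mul_eq_zero.mp this with h | h
      · exact absurd h hs
      · linear_combination -h
    · exact absurd h hAne
  rw [hrr2, one_mul] at hrr3
  exact hrr3

/-- Matrices commuting with a nonscalar `A` with `A²` scalar commute with each other. -/
lemma aux_commutant {A B C : Matrix (Fin 2) (Fin 2) ℂ} {c0 : ℂ}
    (hA2 : A * A = c0 • 1) (hns : ∀ r : ℂ, A ≠ r • 1)
    (hB : A * B = B * A) (hC : A * C = C * A) : B * C = C * B := by
  obtain ⟨a, b, c, d, rfl⟩ : ∃ a b c d, A = !![a, b; c, d] :=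
    ⟨_, _, _, _, Matrix.eta_fin_two A⟩
  obtain ⟨p, q, r, s, rfl⟩ : ∃ p q r s, B = !![p, q; r, s] :=
    ⟨_, _, _, _, Matrix.eta_fin_two B⟩
  obtain ⟨p', q', r', s', rfl⟩ : ∃ p' q' r' s', C = !![p', q'; r', s'] :=
    ⟨_, _, _, _, Matrix.eta_fin_two C⟩
  have scal : ∀ t : ℂ, (t • (1 : Matrix (Fin 2) (Fin 2) ℂ)) = !![t, 0; 0, t] := by
    intro t
    ext i j
    fin_cases i <;> fin_cases j <;> simp [Matrix.smul_apply, Matrix.one_apply]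
  have E := fun (i j : Fin 2) => congrFun (congrFun hA2 i) j
  have e00 : a * a + b * c = c0 := by
    have := E 0 0; rw [scal] at this
    simp [Matrix.mul_apply, Fin.sum_univ_two] at this
    linear_combination this
  have e01 : a * b + b * d = 0 := by
    have := E 0 1; rw [scal] at this
    simp [Matrix.mul_apply, Fin.sum_univ_two] at this
    linear_combination this
  have e10 : c * a + d * c = 0 := by
    have := E 1 0; rw [scal] at this
    simp [Matrix.mul_apply, Fin.sum_univ_two] at this
    linear_combination this
  have e11 : c * b + d * d = c0 := by
    have := E 1 1; rw [scal] at this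
    simp [Matrix.mul_apply, Fin.sum_univ_two] at this
    linear_combination this
  -- trace zero
  have htr : d = -a := by
    by_contra hne
    have had : a + d ≠ 0 := fun h => hne (by linear_combination h)
    have hb0 : b = 0 := by
      have : b * (a + d) = 0 := by linear_combination e01
      rcases mul_eq_zero.mp this with h | h
      · exact h
      · exact absurd h had
    have hc0' : c = 0 := by
      have : c * (a + d) = 0 := by linear_combination e10
      rcases mul_eq_zero.mp this with h | h
      · exact h
      · exact absurd h had
    have hda : d = a := by
      have : (d - a) * (a + d) = 0 := by
        linear_combination e11 - e00
      rcases mul_eq_zero.mp this with h | h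
      · linear_combination h
      · exact absurd h had
    exact hns a (by rw [scal, hb0, hc0', hda])
  have hnz : ¬ (a = 0 ∧ b = 0 ∧ c = 0) := by
    rintro ⟨h1, h2, h3⟩
    refine hns 0 ?_
    rw [scal, h1, h2, h3, show d = 0 by rw [htr, h1, neg_zero]]
  have two_a : ∀ t : ℂ, a ≠ 0 → 2 * a * t = 0 → t = 0 := by
    intro t ha h
    rcases mul_eq_zero.mp h with h | h
    · rcases mul_eq_zero.mp h with h | h
      · exact absurd h two_ne_zero
      · exact absurd h ha
    · exact h
  have FB := fun (i j : Fin 2) => congrFun (congrFun hB i) j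
  have FC := fun (i j : Fin 2) => congrFun (congrFun hC i) j
  have f1 : b * r = q * c := by
    have := FB 0 0
    simp [Matrix.mul_apply, Fin.sum_univ_two] at this
    linear_combination this
  have f2 : b * (p - s) = 2 * a * q := by
    have := FB 0 1
    simp [Matrix.mul_apply, Fin.sum_univ_two] at this
    linear_combination -this - q * htr
  have f3 : c * (p - s) = 2 * a * r := by
    have := FB 1 0
    simp [Matrix.mul_apply, Fin.sum_univ_two] at this
    linear_combination this - r * htr
  have g1 : b * r' = q' * c := by
    have := FC 0 0
    simp [Matrix.mul_apply, Fin.sum_univ_two] at this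
    linear_combination this
  have g2 : b * (p' - s') = 2 * a * q' := by
    have := FC 0 1
    simp [Matrix.mul_apply, Fin.sum_univ_two] at this
    linear_combination -this - q' * htr
  have g3 : c * (p' - s') = 2 * a * r' := by
    have := FC 1 0
    simp [Matrix.mul_apply, Fin.sum_univ_two] at this
    linear_combination this - r' * htr
  have D1 : q * r' = q' * r := by
    by_cases hbz : b = 0
    · by_cases haz : a = 0
      · have hcz : c ≠ 0 := fun h => hnz ⟨haz, hbz, h⟩
        have hq : q = 0 := by
          have : q * c = 0 := by linear_combination -f1 + r * hbz
          rcases mul_eq_zero.mp this with h | h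
          · exact h
          · exact absurd h hcz
        have hq' : q' = 0 := by
          have : q' * c = 0 := by linear_combination -g1 + r' * hbz
          rcases mul_eq_zero.mp this with h | h
          · exact h
          · exact absurd h hcz
        rw [hq, hq']; ring
      · have hq : q = 0 := two_a q haz (by linear_combination -f2 + (p - s) * hbz)
        have hq' : q' = 0 := two_a q' haz (by linear_combination -g2 + (p' - s') * hbz)
        rw [hq, hq']; ring
    · have h0 : b * (q * r' - q' * r) = 0 := by linear_combination q * g1 - q' * f1
      rcases mul_eq_zero.mp h0 with h | h
      · exact absurd h hbz
      · linear_combination h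
  have D2 : q' * (p - s) = q * (p' - s') := by
    by_cases hbz : b = 0
    · by_cases haz : a = 0
      · have hcz : c ≠ 0 := fun h => hnz ⟨haz, hbz, h⟩
        have hq : q = 0 := by
          have : q * c = 0 := by linear_combination -f1 + r * hbz
          rcases mul_eq_zero.mp this with h | h
          · exact h
          · exact absurd h hcz
        have hq' : q' = 0 := by
          have : q' * c = 0 := by linear_combination -g1 + r' * hbz
          rcases mul_eq_zero.mp this with h | h
          · exact h
          · exact absurd h hcz
        rw [hq, hq']; ring
      · have hq : q = 0 := two_a q haz (by linear_combination -f2 + (p - s) * hbz)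
        have hq' : q' = 0 := two_a q' haz (by linear_combination -g2 + (p' - s') * hbz)
        rw [hq, hq']; ring
    · have h0 : b * (q' * (p - s) - q * (p' - s')) = 0 := by
        linear_combination q' * f2 - q * g2
      rcases mul_eq_zero.mp h0 with h | h
      · exact absurd h hbz
      · linear_combination h
  have D3 : r * (p' - s') = r' * (p - s) := by
    by_cases hcz : c = 0
    · by_cases haz : a = 0
      · have hbz : b ≠ 0 := fun h => hnz ⟨haz, h, hcz⟩
        have hrr : r = 0 := by
          have : b * r = 0 := by linear_combination f1 + q * hcz
          rcases mul_eq_zero.mp this with h | h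
          · exact absurd h hbz
          · exact h
        have hrr' : r' = 0 := by
          have : b * r' = 0 := by linear_combination g1 + q' * hcz
          rcases mul_eq_zero.mp this with h | h
          · exact absurd h hbz
          · exact h
        rw [hrr, hrr']; ring
      · have hrr : r = 0 := two_a r haz (by linear_combination -f3 + (p - s) * hcz)
        have hrr' : r' = 0 := two_a r' haz (by linear_combination -g3 + (p' - s') * hcz)
        rw [hrr, hrr']; ring
    · have h0 : c * (r * (p' - s') - r' * (p - s)) = 0 := by
        linear_combination r * g3 - r' * f3
      rcases mul_eq_zero.mp h0 with h | h
      · exact absurd h hcz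
      · linear_combination h
  ext i j
  fin_cases i <;> fin_cases j <;> simp [Matrix.mul_apply, Fin.sum_univ_two]
  · linear_combination D1
  · linear_combination D2
  · linear_combination D3
  · linear_combination -D1

/-- There is no injective group homomorphism from `S₄ × C₂` into `PGL(2,ℂ)`. -/
theorem no_injective_hom_S4_times_C2_into_PGL2 :
    ¬ ∃ f : (Equiv.Perm (Fin 4) × Multiplicative (ZMod 2)) →* PGL2,
      Function.Injective f := by
  rintro ⟨f, hf⟩
  set G := Equiv.Perm (Fin 4) × Multiplicative (ZMod 2)
  let z : G := (1, Multiplicative.ofAdd 1)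
  let x : G := (Equiv.swap 0 1 * Equiv.swap 0 2, 1)
  let y : G := (Equiv.swap 0 1 * Equiv.swap 0 3, 1)
  have hz1 : z ≠ 1 := by decide
  have hz2 : z * z = 1 := by decide
  have hx3 : x * x * x = 1 := by decide
  have hy3 : y * y * y = 1 := by decide
  have hxz : x * z = z * x := by decide
  have hyz : y * z = z * y := by decide
  have hxy : x * y ≠ y * x := by decide
  obtain ⟨A, hA⟩ := QuotientGroup.mk_surjective (f z)
  obtain ⟨B, hB⟩ := QuotientGroup.mk_surjective (f x)
  obtain ⟨C, hC⟩ := QuotientGroup.mk_surjective (f y)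
  have hns : ∀ r : ℂ, (A : Matrix (Fin 2) (Fin 2) ℂ) ≠ r • 1 := by
    intro r h
    have h1 : (↑A : PGL2) = 1 := (QuotientGroup.eq_one_iff A).mpr (aux_scalar_center h)
    rw [hA] at h1
    exact hz1 (hf (by rw [h1, _root_.map_one]))
  obtain ⟨c0, hc0⟩ : ∃ c0 : ℂ, (A : Matrix (Fin 2) (Fin 2) ℂ) * A = c0 • 1 := by
    have h1 : ((A * A : GL2) : PGL2) = 1 := by
      have : f z * f z = 1 := by rw [← _root_.map_mul, hz2, _root_.map_one]
      rw [← hA] at this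
      simpa using this
    exact aux_center_scalar ((QuotientGroup.eq_one_iff _).mp h1)
  obtain ⟨sB, hsB⟩ : ∃ sB : ℂ,
      (B : Matrix (Fin 2) (Fin 2) ℂ) * B * B = sB • 1 := by
    have h1 : ((B * B * B : GL2) : PGL2) = 1 := by
      have : f x * f x * f x = 1 := by rw [← _root_.map_mul, ← _root_.map_mul, hx3, _root_.map_one]
      rw [← hB] at this
      simpa using this
    exact aux_center_scalar ((QuotientGroup.eq_one_iff _).mp h1)
  obtain ⟨sC, hsC⟩ : ∃ sC : ℂ,
      (C : Matrix (Fin 2) (Fin 2) ℂ) * C * C = sC • 1 := by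
    have h1 : ((C * C * C : GL2) : PGL2) = 1 := by
      have : f y * f y * f y = 1 := by rw [← _root_.map_mul, ← _root_.map_mul, hy3, _root_.map_one]
      rw [← hC] at this
      simpa using this
    exact aux_center_scalar ((QuotientGroup.eq_one_iff _).mp h1)
  have hAB : (A : Matrix (Fin 2) (Fin 2) ℂ) * B = (B : Matrix (Fin 2) (Fin 2) ℂ) * A := by
    have hq : ((B * A : GL2) : PGL2) = ((A * B : GL2) : PGL2) := by
      have : f x * f z = f z * f x := by rw [← _root_.map_mul, ← _root_.map_mul, hxz]
      rw [← hA, ← hB] at this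
      simpa using this
    obtain ⟨r, hr⟩ := aux_quot_eq hq
    have hr' : (A : Matrix (Fin 2) (Fin 2) ℂ) * B
        = r • ((B : Matrix (Fin 2) (Fin 2) ℂ) * A) := hr
    have hone : r = 1 := aux_r_eq_one (aux_det_ne_zero A) (aux_det_ne_zero B) hc0 hsB hr'
    rw [hr', hone, one_smul]
  have hAC : (A : Matrix (Fin 2) (Fin 2) ℂ) * C = (C : Matrix (Fin 2) (Fin 2) ℂ) * A := by
    have hq : ((C * A : GL2) : PGL2) = ((A * C : GL2) : PGL2) := by
      have : f y * f z = f z * f y := by rw [← _root_.map_mul, ← _root_.map_mul, hyz]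
      rw [← hA, ← hC] at this
      simpa using this
    obtain ⟨r, hr⟩ := aux_quot_eq hq
    have hr' : (A : Matrix (Fin 2) (Fin 2) ℂ) * C
        = r • ((C : Matrix (Fin 2) (Fin 2) ℂ) * A) := hr
    have hone : r = 1 := aux_r_eq_one (aux_det_ne_zero A) (aux_det_ne_zero C) hc0 hsC hr'
    rw [hr', hone, one_smul]
  have hBC : (B : Matrix (Fin 2) (Fin 2) ℂ) * C = (C : Matrix (Fin 2) (Fin 2) ℂ) * B :=
    aux_commutant hc0 hns hAB hAC
  have hBC' : (B * C : GL2) = C * B := by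
    ext
    exact congrFun (congrFun hBC _) _
  apply hxy
  apply hf
  rw [_root_.map_mul, _root_.map_mul, ← hB, ← hC]
  have : ((B * C : GL2) : PGL2) = ((C * B : GL2) : PGL2) := by rw [hBC']
  simpa using this
end
end

section
/- Let k be an algebraically closed field of characteristic 0, fix a primitive 11th root of unity ξ ∈ k, and let σ act on k^4 by σ(x0,x1,x2,x3) = (x0, ξx1, ξ²x2, ξ³x3). Then the space of quartic forms F in x0,...,x3 such that σ·F = ξ⁶·F is spanned by the monomials x0²x3², x0x1x2x3, x0x2³, x1³x3, x1²x2², and the subspace of such F that additionally are singular at the point (1,1,1,1) (i.e. F and all four partial derivatives vanish there) is 2-dimensional, spanned by (x0x3 − x1x2)² and x0²x3² + 3x1²x2² − 2x0x2³ − 2x1³x3. -/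
set_option maxHeartbeats 1600000

open MvPolynomial

/-- The weight of an exponent vector under the action `xᵢ ↦ ξⁱxᵢ`. -/
def auxWt (d : Fin 4 →₀ ℕ) : ℕ := ∑ i : Fin 4, (i : ℕ) * d i

lemma aux_aeval_monomial_eq (k : Type*) [Field k] (ξ : k) (d : Fin 4 →₀ ℕ) (c : k) :
    aeval (fun i : Fin 4 => C (ξ ^ (i : ℕ)) * X i) (monomial d c)
      = monomial d (ξ ^ auxWt d * c) := by
  rw [aeval_monomial, Finsupp.prod_fintype _ _ (fun i => pow_zero _)]
  simp only [mul_pow, ← C_pow, ← pow_mul]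
  rw [Finset.prod_mul_distrib, ← map_prod, Finset.prod_pow_eq_pow_sum]
  rw [monomial_eq, Finsupp.prod_fintype _ _ (fun i => pow_zero _)]
  rw [map_mul, algebraMap_eq, auxWt]
  ring

lemma aux_coeff_aeval (k : Type*) [Field k] (ξ : k) (F : MvPolynomial (Fin 4) k)
    (d : Fin 4 →₀ ℕ) :
    coeff d (aeval (fun i : Fin 4 => C (ξ ^ (i : ℕ)) * X i) F) = ξ ^ auxWt d * coeff d F := by
  conv_lhs => rw [F.as_sum, map_sum,
    Finset.sum_congr rfl (fun e _ => aux_aeval_monomial_eq k ξ e _)]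
  rw [coeff_sum]
  simp only [coeff_monomial]
  rw [Finset.sum_ite_eq' F.support d]
  split_ifs with h
  · rfl
  · rw [notMem_support_iff.mp h, mul_zero]

lemma aux_mono_expand (k : Type*) [Field k] (d : Fin 4 →₀ ℕ) (c : k) :
    monomial d c = C c * (X 0 ^ d 0 * X 1 ^ d 1 * X 2 ^ d 2 * X 3 ^ d 3) := by
  rw [monomial_eq, Finsupp.prod_fintype _ _ (fun i => pow_zero _), Fin.prod_univ_four]

lemma aux_degree_four (d : Fin 4 →₀ ℕ) : d.degree = d 0 + d 1 + d 2 + d 3 := by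
  rw [Finsupp.degree_apply, Finset.sum_subset (Finset.subset_univ _)
    (fun i _ hi => Finsupp.notMem_support_iff.mp hi), Fin.sum_univ_four]

lemma aux_wt_eq (d : Fin 4 →₀ ℕ) : auxWt d = d 1 + 2 * d 2 + 3 * d 3 := by
  rw [auxWt, Fin.sum_univ_four]
  show 0 * d 0 + 1 * d 1 + 2 * d 2 + 3 * d 3 = _
  ring

lemma aux_part1_fwd (k : Type*) [Field k] [CharZero k] (ξ : k) (hξ : IsPrimitiveRoot ξ 11)
    (F : MvPolynomial (Fin 4) k) (h1 : F.IsHomogeneous 4)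
    (h2 : aeval (fun i : Fin 4 => C (ξ ^ (i : ℕ)) * X i) F = C (ξ ^ 6) * F) :
    F ∈ Submodule.span k (Set.range
      (![X 0 ^ 2 * X 3 ^ 2, X 0 * X 1 * X 2 * X 3, X 0 * X 2 ^ 3, X 1 ^ 3 * X 3,
        X 1 ^ 2 * X 2 ^ 2] : Fin 5 → MvPolynomial (Fin 4) k)) := by
  set v : Fin 5 → MvPolynomial (Fin 4) k :=
    ![X 0 ^ 2 * X 3 ^ 2, X 0 * X 1 * X 2 * X 3, X 0 * X 2 ^ 3, X 1 ^ 3 * X 3,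
      X 1 ^ 2 * X 2 ^ 2] with hv
  have hvmem : ∀ j : Fin 5, v j ∈ Submodule.span k (Set.range v) :=
    fun j => Submodule.subset_span ⟨j, rfl⟩
  rw [F.as_sum]
  apply Submodule.sum_mem
  intro d hd
  have hc : coeff d F ≠ 0 := mem_support_iff.mp hd
  have hdeg : d 0 + d 1 + d 2 + d 3 = 4 := by
    have := h1 hc
    rw [show (Finsupp.weight 1 : (Fin 4 →₀ ℕ) →+ ℕ) = Finsupp.degree from
      Finsupp.degree_eq_weight_one.symm, aux_degree_four] at this
    exact this
  have heig : ξ ^ auxWt d = ξ ^ 6 := by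
    have := congrArg (coeff d) h2
    rw [aux_coeff_aeval, coeff_C_mul] at this
    exact mul_right_cancel₀ hc this
  have hu : IsPrimitiveRoot (hξ.isUnit (by norm_num)).unit 11 := hξ.isUnit_unit (by norm_num)
  have hmod : auxWt d % 11 = 6 % 11 := by
    have huu : (hξ.isUnit (by norm_num : (11:ℕ) ≠ 0)).unit ^ auxWt d
        = (hξ.isUnit (by norm_num : (11:ℕ) ≠ 0)).unit ^ 6 := by
      ext
      simpa using heig
    have := pow_eq_pow_iff_modEq.mp huu
    rwa [← hu.eq_orderOf] at this
  have hw : d 1 + 2 * d 2 + 3 * d 3 = 6 := by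
    rw [aux_wt_eq] at hmod; omega
  have key : ∀ j : Fin 5, monomial d (coeff d F) = coeff d F • v j →
      monomial d (coeff d F) ∈ Submodule.span k (Set.range v) := by
    intro j h
    rw [h]
    exact Submodule.smul_mem _ _ (hvmem j)
  have hcases : (d 0 = 2 ∧ d 1 = 0 ∧ d 2 = 0 ∧ d 3 = 2) ∨
      (d 0 = 1 ∧ d 1 = 1 ∧ d 2 = 1 ∧ d 3 = 1) ∨
      (d 0 = 1 ∧ d 1 = 0 ∧ d 2 = 3 ∧ d 3 = 0) ∨
      (d 0 = 0 ∧ d 1 = 3 ∧ d 2 = 0 ∧ d 3 = 1) ∨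
      (d 0 = 0 ∧ d 1 = 2 ∧ d 2 = 2 ∧ d 3 = 0) := by omega
  rcases hcases with ⟨h0,h1',h2',h3⟩|⟨h0,h1',h2',h3⟩|⟨h0,h1',h2',h3⟩|⟨h0,h1',h2',h3⟩|⟨h0,h1',h2',h3⟩
  · refine key 0 ?_
    rw [aux_mono_expand, h0, h1', h2', h3, smul_eq_C_mul]
    show _ = C (coeff d F) * (X 0 ^ 2 * X 3 ^ 2)
    ring
  · refine key 1 ?_
    rw [aux_mono_expand, h0, h1', h2', h3, smul_eq_C_mul]
    show _ = C (coeff d F) * (X 0 * X 1 * X 2 * X 3)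
    ring
  · refine key 2 ?_
    rw [aux_mono_expand, h0, h1', h2', h3, smul_eq_C_mul]
    show _ = C (coeff d F) * (X 0 * X 2 ^ 3)
    ring
  · refine key 3 ?_
    rw [aux_mono_expand, h0, h1', h2', h3, smul_eq_C_mul]
    show _ = C (coeff d F) * (X 1 ^ 3 * X 3)
    ring
  · refine key 4 ?_
    rw [aux_mono_expand, h0, h1', h2', h3, smul_eq_C_mul]
    show _ = C (coeff d F) * (X 1 ^ 2 * X 2 ^ 2)
    ring

section EigHom

set_option linter.unusedSectionVars false
variable {k : Type*} [Field k] [CharZero k] (ξ : k)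

lemma aux_eig0 : aeval (fun i : Fin 4 => C (ξ ^ (i : ℕ)) * X i)
    (X 0 ^ 2 * X 3 ^ 2 : MvPolynomial (Fin 4) k) = C (ξ ^ 6) * (X 0 ^ 2 * X 3 ^ 2) := by
  simp only [map_mul, map_pow, aeval_X, C_pow,
    show ((0:Fin 4):ℕ) = 0 from rfl, show ((1:Fin 4):ℕ)=1 from rfl,
    show ((2:Fin 4):ℕ)=2 from rfl, show ((3:Fin 4):ℕ)=3 from rfl]
  ring

lemma aux_eig1 : aeval (fun i : Fin 4 => C (ξ ^ (i : ℕ)) * X i)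
    (X 0 * X 1 * X 2 * X 3 : MvPolynomial (Fin 4) k) = C (ξ ^ 6) * (X 0 * X 1 * X 2 * X 3) := by
  simp only [map_mul, map_pow, aeval_X, C_pow,
    show ((0:Fin 4):ℕ) = 0 from rfl, show ((1:Fin 4):ℕ)=1 from rfl,
    show ((2:Fin 4):ℕ)=2 from rfl, show ((3:Fin 4):ℕ)=3 from rfl]
  ring

lemma aux_eig2 : aeval (fun i : Fin 4 => C (ξ ^ (i : ℕ)) * X i)
    (X 0 * X 2 ^ 3 : MvPolynomial (Fin 4) k) = C (ξ ^ 6) * (X 0 * X 2 ^ 3) := by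
  simp only [map_mul, map_pow, aeval_X, C_pow,
    show ((0:Fin 4):ℕ) = 0 from rfl, show ((1:Fin 4):ℕ)=1 from rfl,
    show ((2:Fin 4):ℕ)=2 from rfl, show ((3:Fin 4):ℕ)=3 from rfl]
  ring

lemma aux_eig3 : aeval (fun i : Fin 4 => C (ξ ^ (i : ℕ)) * X i)
    (X 1 ^ 3 * X 3 : MvPolynomial (Fin 4) k) = C (ξ ^ 6) * (X 1 ^ 3 * X 3) := by
  simp only [map_mul, map_pow, aeval_X, C_pow,
    show ((0:Fin 4):ℕ) = 0 from rfl, show ((1:Fin 4):ℕ)=1 from rfl,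
    show ((2:Fin 4):ℕ)=2 from rfl, show ((3:Fin 4):ℕ)=3 from rfl]
  ring

lemma aux_eig4 : aeval (fun i : Fin 4 => C (ξ ^ (i : ℕ)) * X i)
    (X 1 ^ 2 * X 2 ^ 2 : MvPolynomial (Fin 4) k) = C (ξ ^ 6) * (X 1 ^ 2 * X 2 ^ 2) := by
  simp only [map_mul, map_pow, aeval_X, C_pow,
    show ((0:Fin 4):ℕ) = 0 from rfl, show ((1:Fin 4):ℕ)=1 from rfl,
    show ((2:Fin 4):ℕ)=2 from rfl, show ((3:Fin 4):ℕ)=3 from rfl]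
  ring

lemma aux_hom0 : (X 0 ^ 2 * X 3 ^ 2 : MvPolynomial (Fin 4) k).IsHomogeneous 4 := by
  have := ((isHomogeneous_X k (0:Fin 4)).pow 2).mul ((isHomogeneous_X k 3).pow 2)
  norm_num at this; exact this

lemma aux_hom1 : (X 0 * X 1 * X 2 * X 3 : MvPolynomial (Fin 4) k).IsHomogeneous 4 := by
  have := (((isHomogeneous_X k (0:Fin 4)).mul (isHomogeneous_X k 1)).mul
    (isHomogeneous_X k 2)).mul (isHomogeneous_X k 3)
  norm_num at this; exact this

lemma aux_hom2 : (X 0 * X 2 ^ 3 : MvPolynomial (Fin 4) k).IsHomogeneous 4 := by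
  have := (isHomogeneous_X k (0:Fin 4)).mul ((isHomogeneous_X k 2).pow 3)
  norm_num at this; exact this

lemma aux_hom3 : (X 1 ^ 3 * X 3 : MvPolynomial (Fin 4) k).IsHomogeneous 4 := by
  have := ((isHomogeneous_X k (1:Fin 4)).pow 3).mul (isHomogeneous_X k 3)
  norm_num at this; exact this

lemma aux_hom4 : (X 1 ^ 2 * X 2 ^ 2 : MvPolynomial (Fin 4) k).IsHomogeneous 4 := by
  have := ((isHomogeneous_X k (1:Fin 4)).pow 2).mul ((isHomogeneous_X k 2).pow 2)
  norm_num at this; exact this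

lemma aux_gderiv (c0 c1 : k) (i : Fin 4) :
    eval (fun _ => (1:k)) (pderiv i (c0 • ((X 0 * X 3 - X 1 * X 2)^2 : MvPolynomial (Fin 4) k)
      + c1 • (X 0 ^ 2 * X 3 ^ 2 + 3 * X 1 ^ 2 * X 2 ^ 2 - 2 * X 0 * X 2 ^ 3
        - 2 * X 1 ^ 3 * X 3))) = 0 := by
  simp only [show (3 : MvPolynomial (Fin 4) k) = C 3 from (map_ofNat C 3).symm,
    show (2 : MvPolynomial (Fin 4) k) = C 2 from (map_ofNat C 2).symm]
  fin_cases i <;>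
    simp [pderiv_mul, pderiv_pow, pderiv_X, pderiv_C, smul_eval] <;> first | ring1 | norm_num

lemma aux_mderiv_eqs (c : Fin 5 → k)
    (h : ∀ i : Fin 4, eval (fun _ => (1:k)) (pderiv i
      (c 0 • (X 0 ^ 2 * X 3 ^ 2) + c 1 • (X 0 * X 1 * X 2 * X 3) + c 2 • (X 0 * X 2 ^ 3)
        + c 3 • (X 1 ^ 3 * X 3) + c 4 • (X 1 ^ 2 * X 2 ^ 2) : MvPolynomial (Fin 4) k)) = 0) :
    c 1 = -(2 * c 0) - c 2 ∧ c 3 = c 2 ∧ c 4 = c 0 - c 2 := by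
  have e0 := h 0
  have e1 := h 1
  have e2 := h 2
  have e3 := h 3
  simp [pderiv_mul, pderiv_pow, pderiv_X, smul_eval] at e0 e1 e2 e3
  exact ⟨by linear_combination e0, by linear_combination e3 - e0,
    by linear_combination (e2 - e0)/2⟩

lemma aux_comb_identity (c : Fin 5 → k) (h1 : c 1 = -(2*c 0) - c 2) (h3 : c 3 = c 2)
    (h4 : c 4 = c 0 - c 2) :
    c 0 • (X 0^2*X 3^2 : MvPolynomial (Fin 4) k) + c 1 • (X 0*X 1*X 2*X 3) + c 2 • (X 0*X 2^3)
      + c 3 • (X 1^3*X 3) + c 4 • (X 1^2*X 2^2)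
    = (c 0 + c 2/2) • ((X 0*X 3 - X 1*X 2)^2)
      + (-(c 2/2)) • (X 0^2*X 3^2 + 3*X 1^2*X 2^2 - 2*X 0*X 2^3 - 2*X 1^3*X 3) := by
  have ht : (2 : MvPolynomial (Fin 4) k) * C (c 2 / 2) = C (c 2) := by
    have h2' : (2:k) * (c 2 / 2) = c 2 := by ring
    calc (2 : MvPolynomial (Fin 4) k) * C (c 2 / 2) = C 2 * C (c 2 / 2) := by rw [map_ofNat]
      _ = C (2 * (c 2 / 2)) := (map_mul C _ _).symm
      _ = C (c 2) := by rw [h2']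
  rw [h1, h3, h4]
  simp only [smul_eq_C_mul, map_add, map_sub, map_neg, map_mul, map_ofNat]
  linear_combination
    (X 0*X 1*X 2*X 3 + X 1^2*X 2^2 - X 0*X 2^3 - X 1^3*X 3 : MvPolynomial (Fin 4) k) * ht

lemma aux_linindep : LinearIndependent k
    (![(X 0 * X 3 - X 1 * X 2) ^ 2,
      X 0 ^ 2 * X 3 ^ 2 + 3 * X 1 ^ 2 * X 2 ^ 2 - 2 * X 0 * X 2 ^ 3 - 2 * X 1 ^ 3 * X 3] :
      Fin 2 → MvPolynomial (Fin 4) k) := by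
  rw [LinearIndependent.pair_iff]
  intro s t h
  have h1 := congrArg (eval (![1,0,0,1] : Fin 4 → k)) h
  have h2 := congrArg (eval (![0,1,1,0] : Fin 4 → k)) h
  simp [smul_eval] at h1 h2
  exact ⟨by linear_combination (3*h1 - h2)/2, by linear_combination (h2 - h1)/2⟩

end EigHom

/-- Let `k` be an algebraically closed field of characteristic 0, `ξ` a
primitive 11th root of unity and `σ` the diagonal action `xᵢ ↦ ξⁱxᵢ` on `k⁴`.  Then the space
of quartic forms `F` with `σ·F = ξ⁶·F` is spanned by `x₀²x₃², x₀x₁x₂x₃, x₀x₂³, x₁³x₃, x₁²x₂²`,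
and the subspace of those `F` that moreover are singular at `(1,1,1,1)` is 2-dimensional,
spanned by `(x₀x₃ − x₁x₂)²` and `x₀²x₃² + 3x₁²x₂² − 2x₀x₂³ − 2x₁³x₃`. -/
theorem semiinvariant_quartics_for_order_eleven
    (k : Type*) [Field k] [IsAlgClosed k] [CharZero k]
    (ξ : k) (hξ : IsPrimitiveRoot ξ 11) :
    let σF : MvPolynomial (Fin 4) k → MvPolynomial (Fin 4) k :=
      fun F => aeval (fun i : Fin 4 => C (ξ ^ (i : ℕ)) * X i) F
    let m : Fin 5 → MvPolynomial (Fin 4) k :=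
      ![X 0 ^ 2 * X 3 ^ 2, X 0 * X 1 * X 2 * X 3, X 0 * X 2 ^ 3, X 1 ^ 3 * X 3,
        X 1 ^ 2 * X 2 ^ 2]
    let g : Fin 2 → MvPolynomial (Fin 4) k :=
      ![(X 0 * X 3 - X 1 * X 2) ^ 2,
        X 0 ^ 2 * X 3 ^ 2 + 3 * X 1 ^ 2 * X 2 ^ 2 - 2 * X 0 * X 2 ^ 3 - 2 * X 1 ^ 3 * X 3]
    (∀ F : MvPolynomial (Fin 4) k,
      (F.IsHomogeneous 4 ∧ σF F = C (ξ ^ 6) * F) ↔ F ∈ Submodule.span k (Set.range m)) ∧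
    (∀ F : MvPolynomial (Fin 4) k,
      (F.IsHomogeneous 4 ∧ σF F = C (ξ ^ 6) * F ∧
        (∀ i : Fin 4, eval (fun _ => (1 : k)) (pderiv i F) = 0)) ↔
      F ∈ Submodule.span k (Set.range g)) ∧
    LinearIndependent k g := by
  intro σF m g
  -- Part 1
  have part1 : ∀ F : MvPolynomial (Fin 4) k,
      (F.IsHomogeneous 4 ∧ σF F = C (ξ ^ 6) * F) ↔ F ∈ Submodule.span k (Set.range m) := by
    intro F
    constructor
    · rintro ⟨h1, h2⟩
      exact aux_part1_fwd k ξ hξ F h1 h2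
    · intro hF
      rw [Submodule.mem_span_range_iff_exists_fun] at hF
      obtain ⟨c, rfl⟩ := hF
      rw [Fin.sum_univ_five]
      show ((c 0 • (X 0 ^ 2 * X 3 ^ 2) + c 1 • (X 0 * X 1 * X 2 * X 3) + c 2 • (X 0 * X 2 ^ 3)
        + c 3 • (X 1 ^ 3 * X 3) + c 4 • (X 1 ^ 2 * X 2 ^ 2)
          : MvPolynomial (Fin 4) k).IsHomogeneous 4 ∧ _)
      constructor
      · have hsm : ∀ (a : k) (p : MvPolynomial (Fin 4) k), p.IsHomogeneous 4 →
            (a • p).IsHomogeneous 4 :=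
          fun a p hp => (homogeneousSubmodule (Fin 4) k 4).smul_mem a hp
        exact ((((hsm _ _ (aux_hom0)).add (hsm _ _ (aux_hom1))).add
          (hsm _ _ (aux_hom2))).add (hsm _ _ (aux_hom3))).add (hsm _ _ (aux_hom4))
      · show aeval (fun i : Fin 4 => C (ξ ^ (i : ℕ)) * X i)
            (c 0 • (X 0 ^ 2 * X 3 ^ 2) + c 1 • (X 0 * X 1 * X 2 * X 3) + c 2 • (X 0 * X 2 ^ 3)
              + c 3 • (X 1 ^ 3 * X 3) + c 4 • (X 1 ^ 2 * X 2 ^ 2))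
          = C (ξ ^ 6) * (c 0 • (X 0 ^ 2 * X 3 ^ 2) + c 1 • (X 0 * X 1 * X 2 * X 3)
              + c 2 • (X 0 * X 2 ^ 3) + c 3 • (X 1 ^ 3 * X 3) + c 4 • (X 1 ^ 2 * X 2 ^ 2))
        simp only [map_add, map_smul]
        rw [aux_eig0, aux_eig1, aux_eig2, aux_eig3, aux_eig4]
        simp only [smul_eq_C_mul]
        ring
  refine ⟨part1, ?_, ?_⟩
  · -- Part 2
    intro F
    constructor
    · rintro ⟨h1, h2, h3⟩
      have hspan := (part1 F).mp ⟨h1, h2⟩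
      rw [Submodule.mem_span_range_iff_exists_fun] at hspan
      obtain ⟨c, hc⟩ := hspan
      rw [Fin.sum_univ_five] at hc
      have hc' : c 0 • (X 0 ^ 2 * X 3 ^ 2) + c 1 • (X 0 * X 1 * X 2 * X 3)
          + c 2 • (X 0 * X 2 ^ 3) + c 3 • (X 1 ^ 3 * X 3)
          + c 4 • (X 1 ^ 2 * X 2 ^ 2) = F := hc
      have heqs := aux_mderiv_eqs c (fun i => by rw [hc']; exact h3 i)
      rw [Submodule.mem_span_range_iff_exists_fun]
      refine ⟨![c 0 + c 2/2, -(c 2/2)], ?_⟩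
      rw [Fin.sum_univ_two]
      show (c 0 + c 2/2) • ((X 0*X 3 - X 1*X 2)^2)
        + (-(c 2/2)) • (X 0^2*X 3^2 + 3*X 1^2*X 2^2 - 2*X 0*X 2^3 - 2*X 1^3*X 3) = F
      rw [← hc']
      exact (aux_comb_identity c heqs.1 heqs.2.1 heqs.2.2).symm
    · intro hF
      rw [Submodule.mem_span_range_iff_exists_fun] at hF
      obtain ⟨c, hc⟩ := hF
      rw [Fin.sum_univ_two] at hc
      have hc' : c 0 • ((X 0 * X 3 - X 1 * X 2)^2)
          + c 1 • (X 0 ^ 2 * X 3 ^ 2 + 3 * X 1 ^ 2 * X 2 ^ 2 - 2 * X 0 * X 2 ^ 3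
            - 2 * X 1 ^ 3 * X 3) = F := hc
      have hmem : F ∈ Submodule.span k (Set.range m) := by
        have hm : ∀ j : Fin 5, m j ∈ Submodule.span k (Set.range m) :=
          fun j => Submodule.subset_span ⟨j, rfl⟩
        have hg0 : ((X 0 * X 3 - X 1 * X 2)^2 : MvPolynomial (Fin 4) k)
            = m 0 - (2:k) • m 1 + m 4 := by
          show ((X 0 * X 3 - X 1 * X 2)^2 : MvPolynomial (Fin 4) k)
            = X 0 ^ 2 * X 3 ^ 2 - (2:k) • (X 0 * X 1 * X 2 * X 3) + X 1 ^ 2 * X 2 ^ 2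
          rw [smul_eq_C_mul, map_ofNat]
          ring
        have hg1 : (X 0 ^ 2 * X 3 ^ 2 + 3 * X 1 ^ 2 * X 2 ^ 2 - 2 * X 0 * X 2 ^ 3
            - 2 * X 1 ^ 3 * X 3 : MvPolynomial (Fin 4) k)
            = m 0 + (3:k) • m 4 - (2:k) • m 2 - (2:k) • m 3 := by
          show _ = X 0 ^ 2 * X 3 ^ 2 + (3:k) • (X 1 ^ 2 * X 2 ^ 2) - (2:k) • (X 0 * X 2 ^ 3)
            - (2:k) • (X 1 ^ 3 * X 3)
          rw [smul_eq_C_mul, smul_eq_C_mul, smul_eq_C_mul, map_ofNat, map_ofNat]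
          ring
        have hg0m : ((X 0 * X 3 - X 1 * X 2)^2 : MvPolynomial (Fin 4) k)
            ∈ Submodule.span k (Set.range m) := by
          rw [hg0]
          exact Submodule.add_mem _ (Submodule.sub_mem _ (hm 0)
            (Submodule.smul_mem _ _ (hm 1))) (hm 4)
        have hg1m : (X 0 ^ 2 * X 3 ^ 2 + 3 * X 1 ^ 2 * X 2 ^ 2 - 2 * X 0 * X 2 ^ 3
            - 2 * X 1 ^ 3 * X 3 : MvPolynomial (Fin 4) k)
            ∈ Submodule.span k (Set.range m) := by
          rw [hg1]
          exact Submodule.sub_mem _ (Submodule.sub_mem _ (Submodule.add_mem _ (hm 0)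
            (Submodule.smul_mem _ _ (hm 4))) (Submodule.smul_mem _ _ (hm 2)))
            (Submodule.smul_mem _ _ (hm 3))
        rw [← hc']
        exact Submodule.add_mem _ (Submodule.smul_mem _ _ hg0m)
          (Submodule.smul_mem _ _ hg1m)
      obtain ⟨h1, h2⟩ := (part1 F).mpr hmem
      refine ⟨h1, h2, fun i => ?_⟩
      rw [← hc']
      exact aux_gderiv (c 0) (c 1) i
  · -- linear independence
    exact aux_linindep
end
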